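/- Let (H_ε¹)_ε and (H_ε²)_ε be nets of continuous functions on X × X supported in K × K (K ⊆ X compact) with sup|H_ε^i| ≤ k|ln ε| for both i, and suppose sup|H_ε¹ − H_ε²| = O(ε^m) for every m ∈ ℕ. Let S_ε^i = ∑_{n≥1} L_{n,ε}^i / n! be the corresponding exponential kernel sums. Then sup|S_ε¹ − S_ε²| = O(ε^m) for every m ∈ ℕ. -/

import Mathlib

open MeasureTheory Filter Asymptotics

/-- The filter `ε → 0⁺` with `ε ∈ (0,1]`. -/
noncomputable def lzero : Filter ℝ := nhdsWithin 0 (Set.Ioc 0 1)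

/-- Per-ε key estimate. -/
lemma per_eps_key {d : ℕ} {K : Set (Fin d → ℝ)} (hK : IsCompact K)
    (H₁ H₂ : (Fin d → ℝ) × (Fin d → ℝ) → ℂ)
    (hc₁ : Continuous H₁) (hc₂ : Continuous H₂)
    (M : ℝ) (hM : 0 ≤ M) (hb₁ : ∀ z, ‖H₁ z‖ ≤ M) (hb₂ : ∀ z, ‖H₂ z‖ ≤ M)
    (L₁ L₂ : ℕ → (Fin d → ℝ) × (Fin d → ℝ) → ℂ)
    (h1 : L₁ 1 = H₁) (h2 : L₂ 1 = H₂)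
    (hrec₁ : ∀ n ≥ 2, ∀ z : (Fin d → ℝ) × (Fin d → ℝ),
        L₁ n z = ∫ ξ in K, L₁ (n - 1) (z.1, ξ) * H₁ (ξ, z.2))
    (hrec₂ : ∀ n ≥ 2, ∀ z : (Fin d → ℝ) × (Fin d → ℝ),
        L₂ n z = ∫ ξ in K, L₂ (n - 1) (z.1, ξ) * H₂ (ξ, z.2))
    (S₁ S₂ : (Fin d → ℝ) × (Fin d → ℝ) → ℂ)
    (hS₁ : ∀ z, S₁ z = ∑' n : ℕ, L₁ (n + 1) z / ((n + 1).factorial : ℂ))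
    (hS₂ : ∀ z, S₂ z = ∑' n : ℕ, L₂ (n + 1) z / ((n + 1).factorial : ℂ)) :
    ∀ z, ‖S₁ z - S₂ z‖ ≤ (⨆ w, ‖H₁ w - H₂ w‖) *
      Real.exp ((volume K).toReal * M) := by
  set V : ℝ := (volume K).toReal with hV
  have hV0 : 0 ≤ V := ENNReal.toReal_nonneg
  set D : ℝ := ⨆ w, ‖H₁ w - H₂ w‖ with hD
  haveI : IsFiniteMeasure (volume.restrict K) :=
    ⟨by simpa [Measure.restrict_apply_univ] using hK.measure_lt_top⟩
  have hDbdd : BddAbove (Set.range fun w => ‖H₁ w - H₂ w‖) := by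
    refine ⟨M + M, ?_⟩
    rintro x ⟨w, rfl⟩
    exact (norm_sub_le _ _).trans (add_le_add (hb₁ w) (hb₂ w))
  have hDle : ∀ w, ‖H₁ w - H₂ w‖ ≤ D := fun w => le_ciSup hDbdd w
  have hD0 : 0 ≤ D := Real.iSup_nonneg fun w => norm_nonneg _
  -- main induction
  have main : ∀ n : ℕ,
      (∀ z1, StronglyMeasurable (fun ξ => L₁ (n + 1) (z1, ξ))) ∧
      (∀ z1, StronglyMeasurable (fun ξ => L₂ (n + 1) (z1, ξ))) ∧
      (∀ z, ‖L₁ (n + 1) z‖ ≤ V ^ n * M ^ (n + 1)) ∧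
      (∀ z, ‖L₂ (n + 1) z‖ ≤ V ^ n * M ^ (n + 1)) ∧
      (∀ z, ‖L₁ (n + 1) z - L₂ (n + 1) z‖ ≤ (n + 1) * (V * M) ^ n * D) := by
    intro n
    induction n with
    | zero =>
      refine ⟨?_, ?_, ?_, ?_, ?_⟩
      · intro z1
        simp only [zero_add, h1]
        exact Continuous.stronglyMeasurable (by fun_prop)
      · intro z1
        simp only [zero_add, h2]
        exact Continuous.stronglyMeasurable (by fun_prop)
      · intro z; simpa [h1] using hb₁ z
      · intro z; simpa [h2] using hb₂ z
      · intro z; simpa [h1, h2] using hDle z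
    | succ n ih =>
      obtain ⟨sm₁, sm₂, b₁, b₂, bd⟩ := ih
      have hn2 : n + 2 ≥ 2 := by omega
      have hrec₁' : ∀ z : (Fin d → ℝ) × (Fin d → ℝ),
          L₁ (n + 2) z = ∫ ξ in K, L₁ (n + 1) (z.1, ξ) * H₁ (ξ, z.2) :=
        fun z => hrec₁ (n + 2) hn2 z
      have hrec₂' : ∀ z : (Fin d → ℝ) × (Fin d → ℝ),
          L₂ (n + 2) z = ∫ ξ in K, L₂ (n + 1) (z.1, ξ) * H₂ (ξ, z.2) :=
        fun z => hrec₂ (n + 2) hn2 z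
      -- strong measurability of the integrands (jointly, and in ξ for fixed z)
      have smint₁ : ∀ z1, StronglyMeasurable fun ξ => L₁ (n + 2) (z1, ξ) := by
        intro z1
        have hpt : (fun ξ => L₁ (n + 2) (z1, ξ)) =
            fun ξ => ∫ η, L₁ (n + 1) (z1, η) * H₁ (η, ξ) ∂(volume.restrict K) := by
          funext ξ; exact hrec₁' (z1, ξ)
        rw [hpt]
        have hjm : StronglyMeasurable fun p : (Fin d → ℝ) × (Fin d → ℝ) =>
            L₁ (n + 1) (z1, p.2) * H₁ (p.2, p.1) :=
          ((sm₁ z1).comp_measurable measurable_snd).mul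
            (hc₁.comp (continuous_snd.prodMk continuous_fst)).stronglyMeasurable
        exact hjm.integral_prod_right'
      have smint₂ : ∀ z1, StronglyMeasurable fun ξ => L₂ (n + 2) (z1, ξ) := by
        intro z1
        have hpt : (fun ξ => L₂ (n + 2) (z1, ξ)) =
            fun ξ => ∫ η, L₂ (n + 1) (z1, η) * H₂ (η, ξ) ∂(volume.restrict K) := by
          funext ξ; exact hrec₂' (z1, ξ)
        rw [hpt]
        have hjm : StronglyMeasurable fun p : (Fin d → ℝ) × (Fin d → ℝ) =>
            L₂ (n + 1) (z1, p.2) * H₂ (p.2, p.1) :=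
          ((sm₂ z1).comp_measurable measurable_snd).mul
            (hc₂.comp (continuous_snd.prodMk continuous_fst)).stronglyMeasurable
        exact hjm.integral_prod_right'
      -- integrability
      have int₁ : ∀ z : (Fin d → ℝ) × (Fin d → ℝ),
          IntegrableOn (fun ξ => L₁ (n + 1) (z.1, ξ) * H₁ (ξ, z.2)) K volume := by
        intro z
        refine Integrable.mono' (integrable_const (V ^ n * M ^ (n + 1) * M)) ?_ ?_
        · exact ((sm₁ z.1).mul
            ((hc₁.comp (continuous_id.prodMk continuous_const)).stronglyMeasurable)).aestronglyMeasurable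
        · filter_upwards with ξ
          rw [norm_mul]
          exact mul_le_mul (b₁ (z.1, ξ)) (hb₁ (ξ, z.2)) (norm_nonneg _)
            (by positivity)
      have int₂ : ∀ z : (Fin d → ℝ) × (Fin d → ℝ),
          IntegrableOn (fun ξ => L₂ (n + 1) (z.1, ξ) * H₂ (ξ, z.2)) K volume := by
        intro z
        refine Integrable.mono' (integrable_const (V ^ n * M ^ (n + 1) * M)) ?_ ?_
        · exact ((sm₂ z.1).mul
            ((hc₂.comp (continuous_id.prodMk continuous_const)).stronglyMeasurable)).aestronglyMeasurable
        · filter_upwards with ξ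
          rw [norm_mul]
          exact mul_le_mul (b₂ (z.1, ξ)) (hb₂ (ξ, z.2)) (norm_nonneg _)
            (by positivity)
      refine ⟨smint₁, smint₂, ?_, ?_, ?_⟩
      · intro z
        rw [hrec₁' z]
        calc ‖∫ ξ in K, L₁ (n + 1) (z.1, ξ) * H₁ (ξ, z.2)‖
            ≤ ∫ _ξ in K, V ^ n * M ^ (n + 1) * M := by
              refine norm_integral_le_of_norm_le (integrable_const _) ?_
              filter_upwards with ξ
              rw [norm_mul]
              exact mul_le_mul (b₁ (z.1, ξ)) (hb₁ (ξ, z.2)) (norm_nonneg _)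
                (by positivity)
          _ = V ^ (n + 1) * M ^ (n + 2) := by
              rw [setIntegral_const, smul_eq_mul, measureReal_def, ← hV]; ring
      · intro z
        rw [hrec₂' z]
        calc ‖∫ ξ in K, L₂ (n + 1) (z.1, ξ) * H₂ (ξ, z.2)‖
            ≤ ∫ _ξ in K, V ^ n * M ^ (n + 1) * M := by
              refine norm_integral_le_of_norm_le (integrable_const _) ?_
              filter_upwards with ξ
              rw [norm_mul]
              exact mul_le_mul (b₂ (z.1, ξ)) (hb₂ (ξ, z.2)) (norm_nonneg _)
                (by positivity)
          _ = V ^ (n + 1) * M ^ (n + 2) := by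
              rw [setIntegral_const, smul_eq_mul, measureReal_def, ← hV]; ring
      · intro z
        rw [hrec₁' z, hrec₂' z, ← integral_sub (int₁ z) (int₂ z)]
        have key : ‖∫ ξ in K,
            (L₁ (n + 1) (z.1, ξ) * H₁ (ξ, z.2) - L₂ (n + 1) (z.1, ξ) * H₂ (ξ, z.2))‖
            ≤ ∫ _ξ in K,
              ((n + 1) * (V * M) ^ n * D * M + V ^ n * M ^ (n + 1) * D) := by
          refine norm_integral_le_of_norm_le (integrable_const _) ?_
          filter_upwards with ξ
          have hsplit : L₁ (n + 1) (z.1, ξ) * H₁ (ξ, z.2)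
              - L₂ (n + 1) (z.1, ξ) * H₂ (ξ, z.2)
              = (L₁ (n + 1) (z.1, ξ) - L₂ (n + 1) (z.1, ξ)) * H₁ (ξ, z.2)
              + L₂ (n + 1) (z.1, ξ) * (H₁ (ξ, z.2) - H₂ (ξ, z.2)) := by ring
          rw [hsplit]
          refine (norm_add_le _ _).trans ?_
          rw [norm_mul, norm_mul]
          refine add_le_add ?_ ?_
          · exact mul_le_mul (bd (z.1, ξ)) (hb₁ (ξ, z.2)) (norm_nonneg _)
              (by positivity)
          · exact mul_le_mul (b₂ (z.1, ξ)) (hDle (ξ, z.2)) (norm_nonneg _)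
              (by positivity)
        refine key.trans ?_
        rw [setIntegral_const, smul_eq_mul, measureReal_def, ← hV]
        apply le_of_eq
        push_cast
        ring
  -- sum up
  intro z
  have hsumg : Summable fun n : ℕ => M * ((V * M) ^ n / n.factorial) :=
    (Real.summable_pow_div_factorial (V * M)).mul_left M
  have hsumd : Summable fun n : ℕ => D * ((V * M) ^ n / n.factorial) :=
    (Real.summable_pow_div_factorial (V * M)).mul_left D
  have hnorm_term₁ : ∀ n : ℕ, ‖L₁ (n + 1) z / ((n + 1).factorial : ℂ)‖
      ≤ M * ((V * M) ^ n / n.factorial) := by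
    intro n
    rw [norm_div]
    have hfc : ‖((n + 1).factorial : ℂ)‖ = ((n + 1).factorial : ℝ) := by
      simp
    rw [hfc]
    have h1' := (main n).2.2.1 z
    have hff : (n.factorial : ℝ) ≤ ((n + 1).factorial : ℝ) := by
      exact_mod_cast Nat.factorial_le (Nat.le_succ n)
    have hnf : (0:ℝ) < n.factorial := by positivity
    calc ‖L₁ (n + 1) z‖ / ((n + 1).factorial : ℝ)
        ≤ (V ^ n * M ^ (n + 1)) / (n.factorial : ℝ) := by
          gcongr <;> first | exact h1' | omega | exact_mod_cast Nat.factorial_le (Nat.le_succ n)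
      _ = M * ((V * M) ^ n / n.factorial) := by rw [mul_pow]; ring
  have hnorm_term₂ : ∀ n : ℕ, ‖L₂ (n + 1) z / ((n + 1).factorial : ℂ)‖
      ≤ M * ((V * M) ^ n / n.factorial) := by
    intro n
    rw [norm_div]
    have hfc : ‖((n + 1).factorial : ℂ)‖ = ((n + 1).factorial : ℝ) := by
      simp
    rw [hfc]
    have h1' := (main n).2.2.2.1 z
    calc ‖L₂ (n + 1) z‖ / ((n + 1).factorial : ℝ)
        ≤ (V ^ n * M ^ (n + 1)) / (n.factorial : ℝ) := by
          gcongr <;> first | exact h1' | omega | exact_mod_cast Nat.factorial_le (Nat.le_succ n)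
      _ = M * ((V * M) ^ n / n.factorial) := by rw [mul_pow]; ring
  have ha : Summable fun n : ℕ => L₁ (n + 1) z / ((n + 1).factorial : ℂ) :=
    Summable.of_norm_bounded hsumg hnorm_term₁
  have hb : Summable fun n : ℕ => L₂ (n + 1) z / ((n + 1).factorial : ℂ) :=
    Summable.of_norm_bounded hsumg hnorm_term₂
  rw [hS₁ z, hS₂ z, ← Summable.tsum_sub ha hb]
  have hdiffterm : ∀ n : ℕ,
      ‖L₁ (n + 1) z / ((n + 1).factorial : ℂ) - L₂ (n + 1) z / ((n + 1).factorial : ℂ)‖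
      ≤ D * ((V * M) ^ n / n.factorial) := by
    intro n
    rw [div_sub_div_same, norm_div]
    have hfc : ‖((n + 1).factorial : ℂ)‖ = ((n + 1).factorial : ℝ) := by simp
    rw [hfc]
    have hbd := (main n).2.2.2.2 z
    have heq : ((n : ℝ) + 1) * (V * M) ^ n * D / ((n + 1).factorial : ℝ)
        = D * ((V * M) ^ n / n.factorial) := by
      rw [Nat.factorial_succ]
      have hnf : (0:ℝ) < n.factorial := by positivity
      push_cast
      field_simp
    calc ‖L₁ (n + 1) z - L₂ (n + 1) z‖ / ((n + 1).factorial : ℝ)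
        ≤ ((n : ℝ) + 1) * (V * M) ^ n * D / ((n + 1).factorial : ℝ) := by
          gcongr <;> first | exact hbd | omega
      _ = D * ((V * M) ^ n / n.factorial) := heq
  have hnormsum : Summable fun n : ℕ =>
      ‖L₁ (n + 1) z / ((n + 1).factorial : ℂ) - L₂ (n + 1) z / ((n + 1).factorial : ℂ)‖ :=
    Summable.of_nonneg_of_le (fun n => norm_nonneg _) hdiffterm hsumd
  calc ‖∑' n : ℕ, (L₁ (n + 1) z / ((n + 1).factorial : ℂ)
          - L₂ (n + 1) z / ((n + 1).factorial : ℂ))‖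
      ≤ ∑' n : ℕ, ‖L₁ (n + 1) z / ((n + 1).factorial : ℂ)
          - L₂ (n + 1) z / ((n + 1).factorial : ℂ)‖ := norm_tsum_le_tsum_norm hnormsum
    _ ≤ ∑' n : ℕ, D * ((V * M) ^ n / n.factorial) :=
        Summable.tsum_le_tsum hdiffterm hnormsum hsumd
    _ = D * ∑' n : ℕ, ((V * M) ^ n / n.factorial) := tsum_mul_left
    _ = D * Real.exp (V * M) := by
        congr 1
        rw [Real.exp_eq_exp_ℝ, NormedSpace.exp_eq_tsum_div]

theorem exponential_kernel_sum_independent_of_representative {d : ℕ}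
    {X : Set (Fin d → ℝ)} {K : Set (Fin d → ℝ)} (hX : IsOpen X)
    (hK : IsCompact K) (hKX : K ⊆ X)
    (H₁ H₂ : ℝ → (Fin d → ℝ) × (Fin d → ℝ) → ℂ)
    (hH₁c : ∀ ε ∈ Set.Ioc (0:ℝ) 1, Continuous (H₁ ε))
    (hH₂c : ∀ ε ∈ Set.Ioc (0:ℝ) 1, Continuous (H₂ ε))
    (hsupp₁ : ∀ ε ∈ Set.Ioc (0:ℝ) 1, tsupport (H₁ ε) ⊆ K ×ˢ K)
    (hsupp₂ : ∀ ε ∈ Set.Ioc (0:ℝ) 1, tsupport (H₂ ε) ⊆ K ×ˢ K)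
    (k : ℕ)
    (hk₁ : ∀ᶠ ε in lzero, ∀ z, ‖H₁ ε z‖ ≤ (k : ℝ) * |Real.log ε|)
    (hk₂ : ∀ᶠ ε in lzero, ∀ z, ‖H₂ ε z‖ ≤ (k : ℝ) * |Real.log ε|)
    (hdiff : ∀ m : ℕ,
        (fun ε => ⨆ z, ‖H₁ ε z - H₂ ε z‖) =O[lzero] fun ε : ℝ => ε ^ m)
    (L₁ L₂ : ℝ → ℕ → (Fin d → ℝ) × (Fin d → ℝ) → ℂ)
    (hL₁1 : ∀ ε, L₁ ε 1 = H₁ ε) (hL₂1 : ∀ ε, L₂ ε 1 = H₂ ε)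
    (hL₁rec : ∀ ε, ∀ n ≥ 2, ∀ z : (Fin d → ℝ) × (Fin d → ℝ),
        L₁ ε n z = ∫ ξ in K, L₁ ε (n - 1) (z.1, ξ) * H₁ ε (ξ, z.2))
    (hL₂rec : ∀ ε, ∀ n ≥ 2, ∀ z : (Fin d → ℝ) × (Fin d → ℝ),
        L₂ ε n z = ∫ ξ in K, L₂ ε (n - 1) (z.1, ξ) * H₂ ε (ξ, z.2))
    (S₁ S₂ : ℝ → (Fin d → ℝ) × (Fin d → ℝ) → ℂ)
    (hS₁ : ∀ ε z, S₁ ε z = ∑' n : ℕ, L₁ ε (n + 1) z / ((n + 1).factorial : ℂ))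
    (hS₂ : ∀ ε z, S₂ ε z = ∑' n : ℕ, L₂ ε (n + 1) z / ((n + 1).factorial : ℂ)) :
    ∀ m : ℕ, (fun ε => ⨆ z, ‖S₁ ε z - S₂ ε z‖) =O[lzero] fun ε : ℝ => ε ^ m := by
  intro m
  set V : ℝ := (volume K).toReal with hV
  have hV0 : 0 ≤ V := ENNReal.toReal_nonneg
  obtain ⟨N, hN⟩ := exists_nat_ge (V * k)
  obtain ⟨C, hC⟩ := (hdiff (m + N)).bound
  have h01 : ∀ᶠ ε in lzero, ε ∈ Set.Ioc (0:ℝ) 1 := by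
    have hl : lzero = nhdsWithin (0:ℝ) (Set.Ioc 0 1) := rfl
    rw [hl]
    exact eventually_mem_nhdsWithin
  rw [Asymptotics.isBigO_iff]
  refine ⟨|C|, ?_⟩
  filter_upwards [hk₁, hk₂, hC, h01] with ε hk1 hk2 hCε hε
  have hε0 : (0:ℝ) < ε := hε.1
  have hε1 : ε ≤ 1 := hε.2
  set M : ℝ := (k : ℝ) * |Real.log ε| with hM
  have hM0 : 0 ≤ M := by positivity
  -- the per-ε bound
  have hS := per_eps_key hK (H₁ ε) (H₂ ε) (hH₁c ε hε) (hH₂c ε hε) M hM0 hk1 hk2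
    (L₁ ε) (L₂ ε) (hL₁1 ε) (hL₂1 ε) (hL₁rec ε) (hL₂rec ε) (S₁ ε) (S₂ ε)
    (hS₁ ε) (hS₂ ε)
  set D : ℝ := ⨆ w, ‖H₁ ε w - H₂ ε w‖ with hD
  have hD0 : 0 ≤ D := Real.iSup_nonneg fun w => norm_nonneg _
  -- bound D
  have hDb : D ≤ |C| * ε ^ (m + N) := by
    have : ‖D‖ ≤ C * ‖ε ^ (m + N)‖ := hCε
    rw [Real.norm_of_nonneg hD0] at this
    refine this.trans ?_
    have h1 : C ≤ |C| := le_abs_self C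
    have h2 : ‖ε ^ (m + N)‖ = ε ^ (m + N) := by
      rw [Real.norm_of_nonneg (by positivity)]
    rw [h2]
    exact mul_le_mul_of_nonneg_right h1 (by positivity)
  -- bound the exponential factor
  have hexp : Real.exp (V * M) ≤ ε ^ (-(N : ℝ)) := by
    have hlog : |Real.log ε| = -Real.log ε :=
      abs_of_nonpos (Real.log_nonpos hε0.le hε1)
    have heq : Real.exp (V * M) = ε ^ (-(V * k) : ℝ) := by
      rw [Real.rpow_def_of_pos hε0]
      congr 1
      rw [hM, hlog]
      ring
    rw [heq]
    exact Real.rpow_le_rpow_of_exponent_ge hε0 hε1 (neg_le_neg hN)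
  -- combine
  have hfinal : ∀ z, ‖S₁ ε z - S₂ ε z‖ ≤ |C| * ε ^ m := by
    intro z
    refine (hS z).trans ?_
    calc D * Real.exp (V * M)
        ≤ (|C| * ε ^ (m + N)) * ε ^ (-(N : ℝ)) :=
          mul_le_mul hDb hexp (Real.exp_pos _).le (by positivity)
      _ = |C| * ε ^ m := by
          rw [mul_assoc, ← Real.rpow_natCast ε (m + N), ← Real.rpow_add hε0,
            ← Real.rpow_natCast ε m]
          congr 2
          push_cast
          ring
  have hsup : (⨆ z, ‖S₁ ε z - S₂ ε z‖) ≤ |C| * ε ^ m :=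
    Real.iSup_le hfinal (by positivity)
  have hsup0 : 0 ≤ ⨆ z, ‖S₁ ε z - S₂ ε z‖ :=
    Real.iSup_nonneg fun z => norm_nonneg _
  rw [Real.norm_of_nonneg hsup0, Real.norm_of_nonneg (by positivity : (0:ℝ) ≤ ε ^ m)]
  exact hsup
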